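/- Let ℝ^m carry the Euclidean norm ‖·‖₂, ℝ^n a norm ‖·‖, and D(y,x) := (1/2)‖y − x‖². Let f(x) := (1/2)‖Ax − b‖₂² for A ∈ ℝ^{m×n}, b ∈ ℝ^m, and let X ⊆ ℝ^n be a convex cone such that A(X) is a linear subspace containing more than one point. Then sup{μ ≥ 0 : f is μ-strongly convex relative to (X,D)} = 1/‖(A|X)^{-1}‖². -/

import Mathlib

noncomputable section
open scoped RealInnerProductSpace
open Set

lemma grad_ls {m n : ℕ} (A : EuclideanSpace ℝ (Fin n) →ₗ[ℝ] EuclideanSpace ℝ (Fin m))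
    (b : EuclideanSpace ℝ (Fin m)) (x : EuclideanSpace ℝ (Fin n)) :
    HasGradientAt (fun t => (1 / 2 : ℝ) * ‖A t - b‖ ^ 2) ((LinearMap.adjoint A) (A x - b)) x := by
  have hA : HasFDerivAt (fun t => A t - b) (A.toContinuousLinearMap) x :=
    (A.toContinuousLinearMap.hasFDerivAt).sub_const b
  have h1 : HasFDerivAt (fun t => ⟪A t - b, A t - b⟫)
      ((fderivInnerCLM ℝ (A x - b, A x - b)).comp (A.toContinuousLinearMap.prod A.toContinuousLinearMap)) x :=
    hA.inner ℝ hA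
  have h2 := h1.const_mul (1/2 : ℝ)
  have heq : ∀ t, (1 / 2 : ℝ) * ⟪A t - b, A t - b⟫ = (1 / 2 : ℝ) * ‖A t - b‖ ^ 2 := by
    intro t; rw [real_inner_self_eq_norm_sq]
  rw [hasGradientAt_iff_hasFDerivAt]
  have h3 : HasFDerivAt (fun t => (1 / 2 : ℝ) * ‖A t - b‖ ^ 2)
      ((1/2 : ℝ) • ((fderivInnerCLM ℝ (A x - b, A x - b)).comp (A.toContinuousLinearMap.prod A.toContinuousLinearMap))) x := by
    simpa only [heq] using h2
  refine h3.congr_fderiv ?_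
  ext h
  simp [fderivInnerCLM_apply, InnerProductSpace.toDual_apply_apply, LinearMap.adjoint_inner_left,
    real_inner_comm]
  rw [inner_sub_right, real_inner_comm (A x) (A h), real_inner_comm b (A h)]
  ring

open Set in

set_option maxHeartbeats 2000000 in
lemma key {E F : Type*} [AddCommGroup E] [Module ℝ E] [NormedAddCommGroup F] [NormedSpace ℝ F]
    (nn : E → ℝ) (nn_nonneg : ∀ x, 0 ≤ nn x) (nn_zero : nn 0 = 0)
    (hnn_add : ∀ x y, nn (x + y) ≤ nn x + nn y)
    (hnn_smul : ∀ (c : ℝ) (x : E), nn (c • x) = |c| * nn x)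
    (A : E →ₗ[ℝ] F) (X : Set E)
    (hXconv : Convex ℝ X) (hXcone : ∀ (c : ℝ), 0 < c → ∀ x ∈ X, c • x ∈ X)
    (W : Submodule ℝ F) (hW : A '' X = (W : Set F)) :
    sSup {μ : ℝ | 0 ≤ μ ∧ ∀ x ∈ X, ∀ y ∈ X,
        μ * sInf {r | ∃ z, (z ∈ X ∧ A z = A y) ∧ r = 1 / 2 * nn (z - x) ^ 2}
          ≤ 1 / 2 * ‖A y - A x‖ ^ 2}
      = 1 / (sSup {r : ℝ | ∃ v ∈ A '' X, ‖v‖ ≤ 1 ∧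
          r = sInf {s | ∃ x ∈ X, A x = v ∧ s = nn x}}) ^ 2 := by
  classical
  set ι : F → ℝ := fun v => sInf {s | ∃ x ∈ X, A x = v ∧ s = nn x} with hιdef
  set SD : E → E → ℝ :=
    fun x y => sInf {r | ∃ z, (z ∈ X ∧ A z = A y) ∧ r = 1 / 2 * nn (z - x) ^ 2} with hSDdef
  set Rs : Set ℝ := {r | ∃ v ∈ A '' X, ‖v‖ ≤ 1 ∧ r = ι v} with hRsdef
  set M : Set ℝ := {μ : ℝ | 0 ≤ μ ∧ ∀ x ∈ X, ∀ y ∈ X, μ * SD x y ≤ 1 / 2 * ‖A y - A x‖ ^ 2}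
    with hMdef
  show sSup M = 1 / (sSup Rs) ^ 2
  clear_value ι SD Rs M
  -- membership transfer
  have memW : ∀ u ∈ X, A u ∈ W := by
    intro u hu
    have h : A u ∈ A '' X := ⟨u, hu, rfl⟩
    rw [hW] at h; exact h
  have memAX : ∀ w : F, w ∈ W → w ∈ A '' X := by
    intro w hw; rw [hW]; exact hw
  -- X is closed under addition
  have hXadd : ∀ x ∈ X, ∀ w ∈ X, x + w ∈ X := by
    intro x hx w hw
    have h := hXconv hx hw (by norm_num : (0:ℝ) ≤ 1/2) (by norm_num : (0:ℝ) ≤ 1/2) (by norm_num)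
    have h2 := hXcone 2 (by norm_num) _ h
    have h3 : (2:ℝ) • ((1/2:ℝ) • x + (1/2:ℝ) • w) = x + w := by
      rw [smul_add, smul_smul, smul_smul]; norm_num
    rwa [h3] at h2
  -- a point of X mapping to 0
  obtain ⟨x₀, hx₀X, hx₀⟩ : ∃ x₀ ∈ X, A x₀ = 0 := memAX 0 W.zero_mem
  -- ι facts
  have ιbdd : ∀ v : F, BddBelow {s | ∃ x ∈ X, A x = v ∧ s = nn x} := by
    intro v; refine ⟨0, ?_⟩; rintro s ⟨x, hx, hax, rfl⟩; exact nn_nonneg x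
  have ιnonneg : ∀ v ∈ A '' X, 0 ≤ ι v := by
    rintro v ⟨x, hx, rfl⟩
    rw [hιdef]
    exact le_csInf ⟨nn x, x, hx, rfl, rfl⟩ (by rintro s ⟨z, hz, haz, rfl⟩; exact nn_nonneg z)
  have ιle : ∀ (v : F), ∀ z ∈ X, A z = v → ι v ≤ nn z := by
    intro v z hz haz; rw [hιdef]; exact csInf_le (ιbdd v) ⟨z, hz, haz, rfl⟩
  have ιexists : ∀ v ∈ A '' X, ∀ ε > (0:ℝ), ∃ u ∈ X, A u = v ∧ nn u < ι v + ε := by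
    rintro v ⟨x, hx, rfl⟩ ε hε
    have hne : {s | ∃ u ∈ X, A u = A x ∧ s = nn u}.Nonempty := ⟨nn x, x, hx, rfl, rfl⟩
    have hlt : sInf {s | ∃ u ∈ X, A u = A x ∧ s = nn u} < ι (A x) + ε := by
      rw [hιdef]; exact lt_add_of_pos_right _ hε
    obtain ⟨s, ⟨u, huX, hau, rfl⟩, hs⟩ := exists_lt_of_csInf_lt hne hlt
    exact ⟨u, huX, hau, hs⟩
  -- SD facts
  have SDbdd : ∀ x y : E, BddBelow {r | ∃ z, (z ∈ X ∧ A z = A y) ∧ r = 1 / 2 * nn (z - x) ^ 2} := by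
    intro x y; refine ⟨0, ?_⟩; rintro r ⟨z, hz, rfl⟩; positivity
  have SDne : ∀ (x : E), ∀ y ∈ X,
      {r | ∃ z, (z ∈ X ∧ A z = A y) ∧ r = 1 / 2 * nn (z - x) ^ 2}.Nonempty := by
    intro x y hy; exact ⟨1 / 2 * nn (y - x) ^ 2, y, ⟨hy, rfl⟩, rfl⟩
  have SDnonneg : ∀ (x : E), ∀ y ∈ X, 0 ≤ SD x y := by
    intro x y hy
    rw [hSDdef]
    exact le_csInf (SDne x y hy) (by rintro r ⟨z, hz, rfl⟩; positivity)
  have SDle : ∀ (x y : E), ∀ z ∈ X, A z = A y → SD x y ≤ 1 / 2 * nn (z - x) ^ 2 := by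
    intro x y z hz haz; rw [hSDdef]; exact csInf_le (SDbdd x y) ⟨z, ⟨hz, haz⟩, rfl⟩
  have SDge : ∀ (x : E), ∀ y ∈ X, ∀ c : ℝ,
      (∀ z ∈ X, A z = A y → c ≤ 1 / 2 * nn (z - x) ^ 2) → c ≤ SD x y := by
    intro x y hy c hc
    rw [hSDdef]
    exact le_csInf (SDne x y hy) (by rintro r ⟨z, ⟨hzX, hzA⟩, rfl⟩; exact hc z hzX hzA)
  -- core upper bound on elements of M
  have hcore : ∀ μ ∈ M, ∀ v ∈ A '' X, ‖v‖ ≤ 1 → μ * (ι v) ^ 2 ≤ 1 := by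
    rintro μ hμM v hv hv1
    rw [hMdef] at hμM
    obtain ⟨hμ0, hμ⟩ := hμM
    obtain ⟨y, hyX, rfl⟩ := hv
    have ht0 : 0 ≤ ι (A y) := ιnonneg _ ⟨y, hyX, rfl⟩
    rcases eq_or_lt_of_le ht0 with h | ht
    · rw [← h]; norm_num
    rcases eq_or_lt_of_le hμ0 with hμz | hμpos
    · rw [← hμz]; norm_num
    refine le_of_forall_pos_le_add ?_
    intro ε hε
    set t := ι (A y) with htdef
    set δ := min t (ε / (2 * t * μ)) with hδdef
    have hδpos : 0 < δ := lt_min ht (by positivity)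
    have hδt : δ ≤ t := min_le_left _ _
    have hδε : δ * (2 * t * μ) ≤ ε := by
      have h1 : δ ≤ ε / (2 * t * μ) := min_le_right _ _
      have h2 : (0:ℝ) < 2 * t * μ := by positivity
      calc δ * (2 * t * μ) ≤ ε / (2 * t * μ) * (2 * t * μ) :=
            mul_le_mul_of_nonneg_right h1 h2.le
        _ = ε := by field_simp
    have hxex : ∃ x ∈ X, A x = 0 ∧ nn x ≤ δ := by
      by_cases hN : nn x₀ = 0
      · exact ⟨x₀, hx₀X, hx₀, by rw [hN]; exact hδpos.le⟩
      · have hNpos : 0 < nn x₀ := lt_of_le_of_ne (nn_nonneg x₀) (Ne.symm hN)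
        refine ⟨(δ / nn x₀) • x₀, hXcone _ (by positivity) _ hx₀X, ?_, ?_⟩
        · rw [map_smul, hx₀, smul_zero]
        · rw [hnn_smul, abs_of_pos (by positivity)]
          rw [div_mul_cancel₀ _ hNpos.ne']
    obtain ⟨x, hxX, hax, hnx⟩ := hxex
    have hcond := hμ x hxX y hyX
    have hlb : 1 / 2 * (t - δ) ^ 2 ≤ SD x y := by
      apply SDge x y hyX
      intro z hzX hazy
      have h1 : t ≤ nn z := by rw [htdef, ← hazy]; exact ιle _ z hzX rfl
      have h2 : nn z ≤ nn (z - x) + nn x := by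
        have h := hnn_add (z - x) x; rwa [sub_add_cancel] at h
      have h3 : t - δ ≤ nn (z - x) := by linarith
      have h4 : 0 ≤ t - δ := by linarith
      nlinarith [nn_nonneg (z - x)]
    have hub : 1 / 2 * ‖A y - A x‖ ^ 2 ≤ 1 / 2 := by
      rw [hax, sub_zero]
      nlinarith [norm_nonneg (A y), hv1]
    have hchain : μ * (1 / 2 * (t - δ) ^ 2) ≤ 1 / 2 :=
      le_trans (le_trans (mul_le_mul_of_nonneg_left hlb hμ0) hcond) hub
    nlinarith [sq_nonneg δ, mul_pos hμpos hδpos]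
  -- Rs facts
  have Rmem : ∀ v ∈ A '' X, ‖v‖ ≤ 1 → ι v ∈ Rs := by
    intro v hv hv1; rw [hRsdef]; exact ⟨v, hv, hv1, rfl⟩
  have Rnonneg : ∀ r ∈ Rs, 0 ≤ r := by
    intro r hr; rw [hRsdef] at hr
    obtain ⟨v, hv, _, rfl⟩ := hr
    exact ιnonneg v hv
  have Rne : Rs.Nonempty := ⟨ι 0, Rmem 0 (memAX 0 W.zero_mem) (by simp)⟩
  have Rel : ∀ r ∈ Rs, ∃ v ∈ A '' X, ‖v‖ ≤ 1 ∧ r = ι v := by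
    intro r hr; rw [hRsdef] at hr; exact hr
  have zero_mem_M : (0:ℝ) ∈ M := by
    rw [hMdef]
    refine ⟨le_refl 0, ?_⟩
    intro x hx y hy
    rw [zero_mul]
    have := SDnonneg x y hy
    positivity
  by_cases hbdd : BddAbove Rs
  · -- bounded case
    have hκ0 : 0 ≤ sSup Rs := by
      obtain ⟨r₀, hr₀⟩ := Rne
      exact le_trans (Rnonneg r₀ hr₀) (le_csSup hbdd hr₀)
    set κ := sSup Rs with hκdef
    clear_value κ
    have key1 : ∀ x ∈ X, ∀ y ∈ X, SD x y ≤ 1 / 2 * ‖A y - A x‖ ^ 2 * κ ^ 2 := by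
      intro x hx y hy
      by_cases hv : A y = A x
      · have h := SDle x y x hx hv.symm
        have h0 : nn (x - x) = 0 := by rw [sub_self, nn_zero]
        rw [h0] at h
        rw [hv, sub_self, norm_zero]
        nlinarith [h]
      · have hvW : A y - A x ∈ A '' X := memAX _ (W.sub_mem (memW y hy) (memW x hx))
        have hvne : A y - A x ≠ 0 := sub_ne_zero.mpr hv
        have hvpos : 0 < ‖A y - A x‖ := norm_pos_iff.mpr hvne
        have hwW : ‖A y - A x‖⁻¹ • (A y - A x) ∈ A '' X := by
          apply memAX
          refine W.smul_mem _ ?_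
          rw [hW] at hvW; exact hvW
        have hw1 : ‖‖A y - A x‖⁻¹ • (A y - A x)‖ ≤ 1 := by
          rw [norm_smul, norm_inv, norm_norm, inv_mul_cancel₀ hvpos.ne']
        have hwκ : ι (‖A y - A x‖⁻¹ • (A y - A x)) ≤ κ := by
          rw [hκdef]; exact le_csSup hbdd (Rmem _ hwW hw1)
        have hιw0 : 0 ≤ ι (‖A y - A x‖⁻¹ • (A y - A x)) := ιnonneg _ hwW
        have hstep : ∀ ε > (0:ℝ), SD x y ≤ 1 / 2 * (‖A y - A x‖ * (κ + ε)) ^ 2 := by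
          intro ε hε
          obtain ⟨u, huX, hau, hu⟩ := ιexists _ hwW ε hε
          have hzX : x + ‖A y - A x‖ • u ∈ X := hXadd x hx _ (hXcone _ hvpos u huX)
          have haz : A (x + ‖A y - A x‖ • u) = A y := by
            rw [map_add, map_smul, hau, smul_smul, mul_inv_cancel₀ hvpos.ne', one_smul]
            abel
          have h1 := SDle x y _ hzX haz
          have h2 : nn (x + ‖A y - A x‖ • u - x) = ‖A y - A x‖ * nn u := by
            rw [add_sub_cancel_left, hnn_smul, abs_of_pos hvpos]
          rw [h2] at h1
          have h3 : nn u < κ + ε := lt_of_lt_of_le hu (by linarith)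
          have h4 : ‖A y - A x‖ * nn u ≤ ‖A y - A x‖ * (κ + ε) :=
            mul_le_mul_of_nonneg_left h3.le (norm_nonneg _)
          have h5 : (0:ℝ) ≤ ‖A y - A x‖ * nn u := mul_nonneg (norm_nonneg _) (nn_nonneg u)
          nlinarith [h1, h4, h5]
        refine le_of_forall_pos_le_add ?_
        intro ε' hε'
        have hC : (0:ℝ) < 1 / 2 * ‖A y - A x‖ ^ 2 := by nlinarith [hvpos]
        have hC2 : (0:ℝ) < 1 / 2 * ‖A y - A x‖ ^ 2 * (2 * κ + 1) := by nlinarith [hC, hκ0]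
        set ε := min 1 (ε' / (1 / 2 * ‖A y - A x‖ ^ 2 * (2 * κ + 1))) with hεdef
        have hεpos : 0 < ε := lt_min one_pos (div_pos hε' hC2)
        have hε1 : ε ≤ 1 := min_le_left _ _
        have hε2 : ε * (1 / 2 * ‖A y - A x‖ ^ 2 * (2 * κ + 1)) ≤ ε' := by
          have h1 : ε ≤ ε' / (1 / 2 * ‖A y - A x‖ ^ 2 * (2 * κ + 1)) := min_le_right _ _
          calc ε * (1 / 2 * ‖A y - A x‖ ^ 2 * (2 * κ + 1))
              ≤ ε' / (1 / 2 * ‖A y - A x‖ ^ 2 * (2 * κ + 1)) *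
                (1 / 2 * ‖A y - A x‖ ^ 2 * (2 * κ + 1)) :=
                mul_le_mul_of_nonneg_right h1 hC2.le
            _ = ε' := by field_simp
        have h1 := hstep ε hεpos
        have hεsq : ε ^ 2 ≤ ε := by nlinarith
        have hkey : 1 / 2 * (‖A y - A x‖ * (κ + ε)) ^ 2
            ≤ 1 / 2 * ‖A y - A x‖ ^ 2 * κ ^ 2 + 1 / 2 * ‖A y - A x‖ ^ 2 * (2 * κ + 1) * ε := by
          nlinarith [mul_nonneg hC.le (sub_nonneg.mpr hεsq)]
        linarith [h1, hkey, hε2]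
    have hMch : M = {μ : ℝ | 0 ≤ μ ∧ μ * κ ^ 2 ≤ 1} := by
      ext μ
      simp only [mem_setOf_eq]
      constructor
      · intro hμ
        have hμ0 : 0 ≤ μ := by rw [hMdef] at hμ; exact hμ.1
        refine ⟨hμ0, ?_⟩
        rcases eq_or_lt_of_le hμ0 with h0 | hμpos
        · rw [← h0]; norm_num
        have hsq : κ ≤ Real.sqrt (1 / μ) := by
          rw [hκdef]
          apply csSup_le Rne
          intro r hr
          obtain ⟨v, hv, hv1, rfl⟩ := Rel r hr
          rw [Real.le_sqrt (ιnonneg v hv) (by positivity)]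
          rw [le_div_iff₀ hμpos]
          linarith [hcore μ hμ v hv hv1]
        have hκsq : κ ^ 2 ≤ 1 / μ := by
          have h2 := Real.sq_sqrt (le_of_lt (by positivity : (0:ℝ) < 1 / μ))
          nlinarith [Real.sqrt_nonneg (1 / μ)]
        calc μ * κ ^ 2 ≤ μ * (1 / μ) := mul_le_mul_of_nonneg_left hκsq hμ0
          _ = 1 := by field_simp
      · rintro ⟨hμ0, hμκ⟩
        rw [hMdef]
        refine ⟨hμ0, ?_⟩
        intro x hx y hy
        have h1 := key1 x hx y hy
        have h2 := SDnonneg x y hy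
        have h3 : μ * SD x y ≤ μ * (1 / 2 * ‖A y - A x‖ ^ 2 * κ ^ 2) :=
          mul_le_mul_of_nonneg_left h1 hμ0
        have h4 : 1 / 2 * ‖A y - A x‖ ^ 2 * (μ * κ ^ 2) ≤ 1 / 2 * ‖A y - A x‖ ^ 2 * 1 :=
          mul_le_mul_of_nonneg_left hμκ (by positivity)
        nlinarith
    rw [hMch]
    rcases eq_or_lt_of_le hκ0 with hκz | hκpos
    · have hset : {μ : ℝ | 0 ≤ μ ∧ μ * κ ^ 2 ≤ 1} = Ici (0:ℝ) := by
        ext μ; simp [← hκz]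
      rw [hset, ← hκz]
      rw [Real.sSup_of_not_bddAbove (by simpa using not_bddAbove_Ici (α := ℝ) (a := 0))]
      norm_num
    · have hset : {μ : ℝ | 0 ≤ μ ∧ μ * κ ^ 2 ≤ 1} = Icc (0:ℝ) (1 / κ ^ 2) := by
        ext μ
        simp only [mem_Icc, mem_setOf_eq]
        constructor
        · rintro ⟨h1, h2⟩
          exact ⟨h1, (le_div_iff₀ (by positivity)).mpr h2⟩
        · rintro ⟨h1, h2⟩
          exact ⟨h1, (le_div_iff₀ (by positivity)).mp h2⟩
      rw [hset, csSup_Icc (by positivity)]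
  · -- unbounded case
    have hM : M = {0} := by
      ext μ
      simp only [mem_singleton_iff]
      constructor
      · intro hμ
        have hμ0 : 0 ≤ μ := by rw [hMdef] at hμ; exact hμ.1
        by_contra hne
        have hμpos : 0 < μ := lt_of_le_of_ne hμ0 (Ne.symm hne)
        refine hbdd ⟨Real.sqrt (1 / μ), ?_⟩
        intro r hr
        obtain ⟨v, hv, hv1, rfl⟩ := Rel r hr
        rw [Real.le_sqrt (ιnonneg v hv) (by positivity)]
        rw [le_div_iff₀ hμpos]
        linarith [hcore μ hμ v hv hv1]
      · rintro rfl; exact zero_mem_M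
    rw [hM, csSup_singleton, Real.sSup_of_not_bddAbove hbdd]
    norm_num


theorem relative_strong_convexity_constant_of_least_squares_conic {m n : ℕ}
    (nn : EuclideanSpace ℝ (Fin n) → ℝ)
    (hnn0 : ∀ x, nn x = 0 ↔ x = 0)
    (hnn_add : ∀ x y, nn (x + y) ≤ nn x + nn y)
    (hnn_smul : ∀ (c : ℝ) (x : EuclideanSpace ℝ (Fin n)), nn (c • x) = |c| * nn x)
    (A : EuclideanSpace ℝ (Fin n) →ₗ[ℝ] EuclideanSpace ℝ (Fin m))
    (b : EuclideanSpace ℝ (Fin m))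
    (f : EuclideanSpace ℝ (Fin n) → ℝ)
    (hf : ∀ x, f x = (1 / 2) * ‖A x - b‖ ^ 2)
    (f' : EuclideanSpace ℝ (Fin n) → EuclideanSpace ℝ (Fin n))
    (hf' : ∀ x, HasGradientAt f (f' x) x)
    (D : EuclideanSpace ℝ (Fin n) → EuclideanSpace ℝ (Fin n) → ℝ)
    (hD : ∀ y x, D y x = (1 / 2) * (nn (y - x)) ^ 2)
    (X : Set (EuclideanSpace ℝ (Fin n)))
    (hXconv : Convex ℝ X)
    (hXcone : ∀ (c : ℝ), 0 < c → ∀ x ∈ X, c • x ∈ X)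
    (hAX : ∃ W : Submodule ℝ (EuclideanSpace ℝ (Fin m)), A '' X = (W : Set (EuclideanSpace ℝ (Fin m))))
    (hAX2 : (A '' X).Nontrivial) :
    sSup {μ : ℝ | 0 ≤ μ ∧ ∀ x ∈ X, ∀ y ∈ X,
        μ * sInf {r | ∃ z, (z ∈ X ∧ f z = f y ∧ ⟪f' z - f' y, z - y⟫ = 0) ∧ r = D z x}
          ≤ sInf {r | ∃ z, (z ∈ X ∧ f z = f y ∧ ⟪f' z - f' y, z - y⟫ = 0) ∧
              r = f z - f x - ⟪f' x, z - x⟫}}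
      = 1 / (sSup {r : ℝ | ∃ v ∈ A '' X, ‖v‖ ≤ 1 ∧
          r = sInf {s | ∃ x ∈ X, A x = v ∧ s = nn x}}) ^ 2 := by
  obtain ⟨W, hW⟩ := hAX
  -- basic facts about nn
  have nn_zero : nn 0 = 0 := (hnn0 0).mpr rfl
  have nn_nonneg : ∀ x, 0 ≤ nn x := by
    intro x
    have h := hnn_add x (-x)
    have h2 : nn (-x) = nn x := by
      have := hnn_smul (-1) x
      simpa using this
    have h3 : nn (x + -x) = 0 := by simpa using nn_zero
    nlinarith [h, h2, h3]
  -- the gradient of f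
  have hf'eq : ∀ x, f' x = (LinearMap.adjoint A) (A x - b) := by
    intro x
    have h1 : HasGradientAt f ((LinearMap.adjoint A) (A x - b)) x := by
      have := grad_ls A b x
      have hfe : f = fun t => (1 / 2 : ℝ) * ‖A t - b‖ ^ 2 := funext hf
      rw [hfe]; exact this
    exact (hf' x).unique h1
  -- inner product identity
  have inner_f' : ∀ z y : EuclideanSpace ℝ (Fin n), ⟪f' z - f' y, z - y⟫ = ‖A z - A y‖ ^ 2 := by
    intro z y
    rw [hf'eq, hf'eq, ← map_sub, ← real_inner_self_eq_norm_sq]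
    have : A z - b - (A y - b) = A z - A y := by abel
    rw [this, LinearMap.adjoint_inner_left, map_sub]
  -- Bregman distance identity
  have breg : ∀ x z : EuclideanSpace ℝ (Fin n),
      f z - f x - ⟪f' x, z - x⟫ = (1 / 2) * ‖A z - A x‖ ^ 2 := by
    intro x z
    rw [hf, hf, hf'eq, LinearMap.adjoint_inner_left, map_sub]
    have h1 : ‖A z - b‖ ^ 2 = ‖(A z - A x) + (A x - b)‖ ^ 2 := by ring_nf; rw [show A z - b = (A z - A x) + (A x - b) by abel]
    rw [h1, norm_add_sq_real]
    linarith [real_inner_comm (A z - A x) (A x - b)]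
  -- condition characterization
  have zcond : ∀ y z : EuclideanSpace ℝ (Fin n),
      (z ∈ X ∧ f z = f y ∧ ⟪f' z - f' y, z - y⟫ = 0) ↔ (z ∈ X ∧ A z = A y) := by
    intro y z
    constructor
    · rintro ⟨hz, -, h2⟩
      rw [inner_f'] at h2
      refine ⟨hz, ?_⟩
      have : ‖A z - A y‖ = 0 := by
        have := sq_eq_zero_iff.mp h2; simpa using this
      exact sub_eq_zero.mp (norm_eq_zero.mp this)
    · rintro ⟨hz, h2⟩
      refine ⟨hz, by rw [hf, hf, h2], ?_⟩
      rw [inner_f', h2]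
      simp
  have hDset : ∀ x y : EuclideanSpace ℝ (Fin n),
      {r | ∃ z, (z ∈ X ∧ f z = f y ∧ ⟪f' z - f' y, z - y⟫ = 0) ∧ r = D z x}
        = {r | ∃ z, (z ∈ X ∧ A z = A y) ∧ r = 1 / 2 * nn (z - x) ^ 2} := by
    intro x y
    ext r
    constructor
    · rintro ⟨z, hc, rfl⟩
      exact ⟨z, (zcond y z).mp hc, hD z x⟩
    · rintro ⟨z, hc, rfl⟩
      exact ⟨z, (zcond y z).mpr hc, (hD z x).symm⟩
  have hRset : ∀ (x : EuclideanSpace ℝ (Fin n)), ∀ y ∈ X,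
      {r | ∃ z, (z ∈ X ∧ f z = f y ∧ ⟪f' z - f' y, z - y⟫ = 0) ∧
          r = f z - f x - ⟪f' x, z - x⟫}
        = {(1 / 2 * ‖A y - A x‖ ^ 2 : ℝ)} := by
    intro x y hy
    ext r
    simp only [Set.mem_singleton_iff, Set.mem_setOf_eq]
    constructor
    · rintro ⟨z, hc, rfl⟩
      obtain ⟨hzX, hAz⟩ := (zcond y z).mp hc
      rw [breg, hAz]
    · rintro rfl
      exact ⟨y, (zcond y y).mpr ⟨hy, rfl⟩, by rw [breg]⟩
  have hMeq : {μ : ℝ | 0 ≤ μ ∧ ∀ x ∈ X, ∀ y ∈ X,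
        μ * sInf {r | ∃ z, (z ∈ X ∧ f z = f y ∧ ⟪f' z - f' y, z - y⟫ = 0) ∧ r = D z x}
          ≤ sInf {r | ∃ z, (z ∈ X ∧ f z = f y ∧ ⟪f' z - f' y, z - y⟫ = 0) ∧
              r = f z - f x - ⟪f' x, z - x⟫}}
      = {μ : ℝ | 0 ≤ μ ∧ ∀ x ∈ X, ∀ y ∈ X,
          μ * sInf {r | ∃ z, (z ∈ X ∧ A z = A y) ∧ r = 1 / 2 * nn (z - x) ^ 2}
            ≤ 1 / 2 * ‖A y - A x‖ ^ 2} := by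
    ext μ
    simp only [Set.mem_setOf_eq]
    refine and_congr_right fun hμ0 => ?_
    refine forall_congr' fun x => forall_congr' fun hx => ?_
    refine forall_congr' fun y => forall_congr' fun hy => ?_
    rw [hDset x y, hRset x y hy, csInf_singleton]
  rw [hMeq]
  exact key nn nn_nonneg nn_zero hnn_add hnn_smul A X hXconv hXcone W hW
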